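/- For every graph G = (V,E), a subset M ⊆ E satisfies |C ∩ M| ≠ 1 for every cycle C of G if and only if it satisfies |C ∩ M| ≠ 1 for every chordless cycle C of G. -/

import Mathlib

open SimpleGraph

variable {V : Type}

section Defs

variable [Fintype V] [DecidableEq V]

/-- A decomposition of a graph `G`: a partition of the vertex set into
blocks each of which induces a connected subgraph of `G`. -/
def IsDecomposition (G : SimpleGraph V) (P : Set (Set V)) : Prop :=
  (∀ U ∈ P, ∀ W ∈ P, U ≠ W → Disjoint U W) ∧
  (∀ v : V, ∃ U ∈ P, v ∈ U) ∧
  (∀ U ∈ P, (G.induce U).Connected)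

/-- An edge `e` straddles distinct blocks of `P` if no block contains both endpoints. -/
def Straddles (P : Set (Set V)) (e : Sym2 V) : Prop := ∀ U ∈ P, ¬ ∀ v ∈ e, v ∈ U

/-- The set of edges of `G` straddling distinct blocks of `P` (the map `φ_G`). -/
def cutEdges (G : SimpleGraph V) (P : Set (Set V)) : Set (Sym2 V) :=
  {e | e ∈ G.edgeSet ∧ Straddles P e}

/-- A multicut of `G`: a set of edges meeting every cycle of `G` in a number of
edges different from 1. -/
def IsMulticut (G : SimpleGraph V) (M : Set (Sym2 V)) : Prop :=
  M ⊆ G.edgeSet ∧ ∀ ⦃u : V⦄ (c : G.Walk u u), c.IsCycle →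
    (M ∩ {e | e ∈ c.edges}).ncard ≠ 1

/-- A multicut of `G'` lifted from `G`. -/
def IsLiftedMulticut (G G' : SimpleGraph V) (M : Set (Sym2 V)) : Prop :=
  ∃ P : Set (Set V), IsDecomposition G P ∧ M = cutEdges G' P

/-- The closed walk `c` has a chord in the graph `H`: an edge of `H` joining two
vertices of `c` that is not an edge of `c`. -/
def HasChord (H : SimpleGraph V) {G : SimpleGraph V} {u : V} (c : G.Walk u u) : Prop :=
  ∃ e ∈ H.edgeSet, (∀ v ∈ e, v ∈ c.support) ∧ e ∉ c.edges

/-- A `vw`-cut of `G`: a minimal set of edges whose removal disconnects `v` from `w`. -/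
def IsCut (G : SimpleGraph V) (v w : V) (C : Finset (Sym2 V)) : Prop :=
  ↑C ⊆ G.edgeSet ∧ ¬ (G.deleteEdges ↑C).Reachable v w ∧
    ∀ C' : Finset (Sym2 V), C' ⊂ C → (G.deleteEdges ↑C').Reachable v w

/-- The cycle inequalities for cycles of `G`. -/
def CycleIneqs (G : SimpleGraph V) (x : Sym2 V → ℕ) : Prop :=
  ∀ ⦃u : V⦄ (c : G.Walk u u), c.IsCycle → ∀ e ∈ c.edges,
    x e ≤ ∑ e' ∈ c.edges.toFinset.erase e, x e'

/-- The path inequalities for pairs `vw ∈ E' \ E` and `vw`-paths of `G`. -/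
def PathIneqs (G G' : SimpleGraph V) (x : Sym2 V → ℕ) : Prop :=
  ∀ v w : V, s(v, w) ∈ G'.edgeSet \ G.edgeSet →
    ∀ p : G.Walk v w, p.IsPath → x s(v, w) ≤ ∑ e ∈ p.edges.toFinset, x e

/-- The cut inequalities for pairs `vw ∈ E' \ E` and `vw`-cuts of `G`. -/
def CutIneqs (G G' : SimpleGraph V) (x : Sym2 V → ℕ) : Prop :=
  ∀ v w : V, s(v, w) ∈ G'.edgeSet \ G.edgeSet →
    ∀ C : Finset (Sym2 V), IsCut G v w C → 1 - x s(v, w) ≤ ∑ e ∈ C, (1 - x e)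

/-- Characteristic vector of an edge set, in `ℝ^{Sym2 V}`. -/
noncomputable def charVec (M : Set (Sym2 V)) : Sym2 V → ℝ :=
  fun e => by classical exact if e ∈ M then 1 else 0

/-- The characteristic vectors of multicuts of `G'` lifted from `G`
(the vertex set of the lifted multicut polytope `Ξ_{GG'}`). -/
def liftedVectors (G G' : SimpleGraph V) : Set (Sym2 V → ℝ) :=
  {x | ∃ M : Set (Sym2 V), IsLiftedMulticut G G' M ∧ x = charVec M}

/-- The characteristic vectors of multicuts of `G'`. -/
def multicutVectors (G' : SimpleGraph V) : Set (Sym2 V → ℝ) :=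
  {x | ∃ M : Set (Sym2 V), IsMulticut G' M ∧ x = charVec M}

/-- The inequality `ineq`, with associated equality `eqn`, defines a facet of the
lifted multicut polytope `Ξ_{GG'}` (which has dimension `|E'|`): it is valid, and
the face it induces has dimension `|E'| - 1`. -/
def DefinesFacet (G G' : SimpleGraph V) (ineq eqn : (Sym2 V → ℝ) → Prop) : Prop :=
  (∀ x ∈ liftedVectors G G', ineq x) ∧
  Module.finrank ℝ (vectorSpan ℝ {x ∈ liftedVectors G G' | eqn x}) = G'.edgeSet.ncard - 1

/-- Facet-defining for the multicut polytope `Ξ_{G'}`. -/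
def DefinesFacetMC (G' : SimpleGraph V) (ineq eqn : (Sym2 V → ℝ) → Prop) : Prop :=
  (∀ x ∈ multicutVectors G', ineq x) ∧
  Module.finrank ℝ (vectorSpan ℝ {x ∈ multicutVectors G' | eqn x}) = G'.edgeSet.ncard - 1

/-- `u` is a `v`-`w`-cut-vertex: it lies on every `vw`-path of `G`. -/
def IsCutVertex (G : SimpleGraph V) (v w u : V) : Prop :=
  ∀ p : G.Walk v w, p.IsPath → u ∈ p.support

/-- `S` is a `u`-`v`-separating node set of `G`. -/
def IsSeparatingSet (G : SimpleGraph V) (u v : V) (S : Set V) : Prop :=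
  u ∉ S ∧ v ∉ S ∧ ∀ p : G.Walk u v, p.IsPath → ∃ s ∈ S, s ∈ p.support

/-- The side of the cut `C` containing `v`. -/
def vSide (G : SimpleGraph V) (C : Finset (Sym2 V)) (v : V) : Set V :=
  {u | (G.deleteEdges ↑C).Reachable v u}

/-- The component of `G` induced by `U` is properly `(vw,C)`-connected. -/
def ProperlyConnected (G : SimpleGraph V) (v w : V) (C : Finset (Sym2 V)) (U : Set V) : Prop :=
  (G.induce U).Connected ∧ v ∈ U ∧ w ∈ U ∧
    ({e | e ∈ C ∧ ∀ u ∈ e, u ∈ U} : Set (Sym2 V)).ncard = 1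

/-- The component of `G` induced by `U` is improperly `(vw,C)`-connected. -/
def ImproperlyConnected (G : SimpleGraph V) (v w : V) (C : Finset (Sym2 V)) (U : Set V) : Prop :=
  (G.induce U).Connected ∧ (U ⊆ vSide G C v ∨ U ⊆ vSide G C w)

/-- `(vw,C)`-connected: properly or improperly so. -/
def VWCConnected (G : SimpleGraph V) (v w : V) (C : Finset (Sym2 V)) (U : Set V) : Prop :=
  ProperlyConnected G v w C U ∨ ImproperlyConnected G v w C U

/-- The vertex set of the maximal component of `H` containing `u`. -/
def compSupp (H : SimpleGraph V) (u : V) : Set V := {u' | H.Reachable u u'}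

end Defs

private lemma two_le_length_of_ne' {G : SimpleGraph V} {x y : V} :
    ∀ (w : G.Walk x y), x ≠ y → s(x, y) ∉ w.edges → 2 ≤ w.length
  | .nil, hxy, _ => absurd rfl hxy
  | .cons _ .nil, _, he => by simp at he
  | .cons _ (.cons _ _), _, _ => by simp only [Walk.length_cons]; omega

private lemma closed_mem_support_tail {G : SimpleGraph V} {u y : V} :
    ∀ (c : G.Walk u u), ¬ c.Nil → y ∈ c.support → y ∈ c.support.tail
  | .nil, hn, _ => absurd Walk.nil_nil hn
  | .cons h w, _, hy => by
      simp only [Walk.support_cons, List.tail_cons]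
      rcases List.mem_cons.mp (by simpa using hy) with rfl | hy'
      · exact w.end_mem_support
      · exact hy'

private lemma aux_chordless [Fintype V] [DecidableEq V] (G : SimpleGraph V) (M : Set (Sym2 V))
    (hcl : ∀ ⦃u : V⦄ (c : G.Walk u u), c.IsCycle → ¬ HasChord G c →
      (M ∩ {e | e ∈ c.edges}).ncard ≠ 1) :
    ∀ (n : ℕ) ⦃u : V⦄ (c : G.Walk u u), c.length ≤ n → c.IsCycle →
      (M ∩ {e | e ∈ c.edges}).ncard ≠ 1 := by
  intro n
  induction n with
  | zero =>
    intro u c hl hc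
    have := hc.three_le_length
    omega
  | succ n ih =>
    intro u c hl hc
    by_cases hch : HasChord G c
    · obtain ⟨e, heG, hsup, hnotedge⟩ := hch
      induction e using Sym2.ind with
      | _ x y =>
      have hadj : G.Adj x y := heG
      have hxy : x ≠ y := hadj.ne
      have hx : x ∈ c.support := hsup x (by simp)
      have hy : y ∈ c.support := hsup y (by simp)
      set c' := c.rotate x hx with hc'def
      have hc' : c'.IsCycle := hc.rotate hx
      have hperm : c'.edges ~r c.edges := c.rotate_edges x hx
      have hedgeiff : ∀ e', e' ∈ c'.edges ↔ e' ∈ c.edges := fun e' => hperm.perm.mem_iff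
      have hnotnil : ¬ c.Nil := hc.not_nil
      have hy' : y ∈ c'.support := by
        have h1 : y ∈ c.support.tail := closed_mem_support_tail c hnotnil hy
        have h2 : y ∈ c'.support.tail := (c.support_rotate x hx).perm.mem_iff.mpr h1
        rw [c'.support_eq_cons]
        exact List.mem_cons_of_mem _ h2
      have hlenrot : c'.length = c.length := by
        rw [hc'def, Walk.rotate, Walk.length_append, Nat.add_comm, ← Walk.length_append,
          Walk.take_spec]
      set p := c'.takeUntil y hy' with hpdef
      set q := c'.dropUntil y hy' with hqdef
      have hspec : p.append q = c' := c'.take_spec hy'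
      have hce : c'.edges = p.edges ++ q.edges := by rw [← hspec, Walk.edges_append]
      have hnodupE : (p.edges ++ q.edges).Nodup := hce ▸ hc'.edges_nodup
      have hdisjE : p.edges.Disjoint q.edges := List.disjoint_of_nodup_append hnodupE
      have hchord' : s(x, y) ∉ c'.edges := fun h => hnotedge ((hedgeiff _).mp h)
      have hsupp : c'.support.tail = p.support.tail ++ q.support.tail := by
        rw [← hspec, Walk.tail_support_append]
      have hnodupS : (p.support.tail ++ q.support.tail).Nodup := hsupp ▸ hc'.support_nodup
      obtain ⟨hnp, hnq, hdisjS⟩ := List.nodup_append.mp hnodupS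
      have hxq : x ∈ q.support.tail := Walk.end_mem_tail_support_of_ne hxy.symm q
      have hyp : y ∈ p.support.tail := Walk.end_mem_tail_support_of_ne hxy p
      have hp : p.IsPath := by
        refine ⟨hc'.isTrail.takeUntil hy', ?_⟩
        rw [p.support_eq_cons]
        exact List.nodup_cons.mpr ⟨fun hx' => hdisjS _ hx' _ hxq rfl, hnp⟩
      have hq : q.IsPath := by
        refine ⟨hc'.isTrail.dropUntil hy', ?_⟩
        rw [q.support_eq_cons]
        exact List.nodup_cons.mpr ⟨fun hy'' => hdisjS _ hyp _ hy'' rfl, hnq⟩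
      have hsp : s(x, y) ∉ p.edges := fun h => hchord' (by rw [hce]; exact List.mem_append_left _ h)
      have hsq : s(y, x) ∉ q.edges := fun h => hchord' (by
        rw [hce, Sym2.eq_swap]; exact List.mem_append_right _ h)
      have hlp : 2 ≤ p.length := two_le_length_of_ne' p hxy hsp
      have hlq : 2 ≤ q.length := two_le_length_of_ne' q hxy.symm hsq
      have hlpq : p.length + q.length = c'.length := by rw [← hspec, Walk.length_append]
      -- the two smaller cycles
      have hc1 : (Walk.cons hadj.symm p).IsCycle :=
        (Walk.cons_isCycle_iff p hadj.symm).mpr ⟨hp, by rwa [Sym2.eq_swap]⟩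
      have hc2 : (Walk.cons hadj q).IsCycle :=
        (Walk.cons_isCycle_iff q hadj).mpr ⟨hq, by rwa [Sym2.eq_swap] at hsq⟩
      have hl1 : (Walk.cons hadj.symm p).length ≤ n := by
        simp only [Walk.length_cons]; omega
      have hl2 : (Walk.cons hadj q).length ≤ n := by
        simp only [Walk.length_cons]; omega
      intro hcard
      obtain ⟨m, hm⟩ := Set.ncard_eq_one.mp hcard
      have hmmem : m ∈ M ∩ {e | e ∈ c.edges} := hm ▸ rfl
      obtain ⟨hmM, hmc⟩ := hmmem
      have hmc' : m ∈ p.edges ++ q.edges := hce ▸ (hedgeiff m).mpr hmc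
      have hmem_c : ∀ e', e' ∈ p.edges ∨ e' ∈ q.edges → e' ∈ c.edges := by
        intro e' h'
        exact (hedgeiff e').mp (hce ▸ List.mem_append.mpr h')
      by_cases hchM : s(x, y) ∈ M
      · rcases List.mem_append.mp hmc' with hmp | hmq
        · -- m ∈ p, contradict with cycle c2 = chord + q
          refine ih (Walk.cons hadj q) hl2 hc2 (Set.ncard_eq_one.mpr ⟨s(x, y), ?_⟩)
          ext e'
          simp only [Set.mem_inter_iff, Set.mem_setOf_eq, Walk.edges_cons, List.mem_cons,
            Set.mem_singleton_iff]
          constructor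
          · rintro ⟨heM, rfl | heq⟩
            · rfl
            · exfalso
              have : e' ∈ M ∩ {e | e ∈ c.edges} := ⟨heM, hmem_c e' (Or.inr heq)⟩
              rw [hm, Set.mem_singleton_iff] at this
              exact hdisjE (this ▸ hmp) heq
          · rintro rfl; exact ⟨hchM, Or.inl rfl⟩
        · -- m ∈ q, contradict with cycle c1 = chord + p
          refine ih (Walk.cons hadj.symm p) hl1 hc1 (Set.ncard_eq_one.mpr ⟨s(y, x), ?_⟩)
          ext e'
          simp only [Set.mem_inter_iff, Set.mem_setOf_eq, Walk.edges_cons, List.mem_cons,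
            Set.mem_singleton_iff]
          constructor
          · rintro ⟨heM, rfl | heq⟩
            · rfl
            · exfalso
              have : e' ∈ M ∩ {e | e ∈ c.edges} := ⟨heM, hmem_c e' (Or.inl heq)⟩
              rw [hm, Set.mem_singleton_iff] at this
              exact hdisjE heq (this ▸ hmq)
          · rintro rfl; rw [Sym2.eq_swap]; exact ⟨hchM, Or.inl rfl⟩
      · rcases List.mem_append.mp hmc' with hmp | hmq
        · -- m ∈ p, chord ∉ M: cycle c1 = chord + p has exactly {m}
          refine ih (Walk.cons hadj.symm p) hl1 hc1 (Set.ncard_eq_one.mpr ⟨m, ?_⟩)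
          ext e'
          simp only [Set.mem_inter_iff, Set.mem_setOf_eq, Walk.edges_cons, List.mem_cons,
            Set.mem_singleton_iff]
          constructor
          · rintro ⟨heM, rfl | heq⟩
            · exact absurd heM (by rwa [Sym2.eq_swap])
            · have : e' ∈ M ∩ {e | e ∈ c.edges} := ⟨heM, hmem_c e' (Or.inl heq)⟩
              rw [hm, Set.mem_singleton_iff] at this
              exact this
          · rintro rfl; exact ⟨hmM, Or.inr hmp⟩
        · refine ih (Walk.cons hadj q) hl2 hc2 (Set.ncard_eq_one.mpr ⟨m, ?_⟩)
          ext e'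
          simp only [Set.mem_inter_iff, Set.mem_setOf_eq, Walk.edges_cons, List.mem_cons,
            Set.mem_singleton_iff]
          constructor
          · rintro ⟨heM, rfl | heq⟩
            · exact absurd heM hchM
            · have : e' ∈ M ∩ {e | e ∈ c.edges} := ⟨heM, hmem_c e' (Or.inr heq)⟩
              rw [hm, Set.mem_singleton_iff] at this
              exact this
          · rintro rfl; exact ⟨hmM, Or.inr hmq⟩
    · exact hcl c hc hch

/-- `M ⊆ E` satisfies `|C ∩ M| ≠ 1` for every cycle `C` of `G`
iff it satisfies this for every chordless cycle `C` of `G`. -/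
theorem multicut_iff_chordless_cycles [Fintype V] [DecidableEq V]
    (G : SimpleGraph V) (M : Set (Sym2 V)) (hM : M ⊆ G.edgeSet) :
    (∀ ⦃u : V⦄ (c : G.Walk u u), c.IsCycle → (M ∩ {e | e ∈ c.edges}).ncard ≠ 1) ↔
    (∀ ⦃u : V⦄ (c : G.Walk u u), c.IsCycle → ¬ HasChord G c →
      (M ∩ {e | e ∈ c.edges}).ncard ≠ 1) := by
  constructor
  · intro h u c hc _
    exact h c hc
  · intro h u c hc
    exact aux_chordless G M h c.length c le_rfl hc
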